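/- Any strategy profile a* that globally maximizes the ordinal potential function Φ of a finite ordinal potential game is a Nash equilibrium of the game. -/
import Mathlib


/-- Sign-based ordinal potential property. -/
def IsOrdinalPotential {I : Type*} [DecidableEq I] {A : I → Type*}
    (U : I → (∀ i, A i) → ℝ) (Φ : (∀ i, A i) → ℝ) : Prop :=
  ∀ (n : I) (a : ∀ i, A i) (x : A n),
    Real.sign (Φ (Function.update a n x) - Φ a) =
      Real.sign (U n (Function.update a n x) - U n a)

theorem stmt7 {I : Type*} [Fintype I] [DecidableEq I] {A : I → Type*} [∀ i, Fintype (A i)]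
    (U : I → (∀ i, A i) → ℝ) (Φ : (∀ i, A i) → ℝ)
    (hpot : IsOrdinalPotential U Φ)
    (astar : ∀ i, A i) (hmax : ∀ a : ∀ i, A i, Φ a ≤ Φ astar) :
    ∀ (n : I) (x : A n), U n (Function.update astar n x) ≤ U n astar := by
  intro n x
  by_contra h
  push_neg at h
  have hU : Real.sign (U n (Function.update astar n x) - U n astar) = 1 :=
    Real.sign_of_pos (by linarith)
  have hΦ := hpot n astar x
  rw [hU] at hΦ
  have : 0 < Φ (Function.update astar n x) - Φ astar := by
    by_contra hle
    push_neg at hle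
    rcases lt_or_eq_of_le hle with hlt | heq
    · rw [Real.sign_of_neg hlt] at hΦ; norm_num at hΦ
    · rw [heq, Real.sign_zero] at hΦ; norm_num at hΦ
  have := hmax (Function.update astar n x)
  linarith
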